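/- For every trimming level α ∈ (0,1), the α-trimmed Bayes error vanishes if and only if the Bayes error is at most the trimming level: Err_α(P) = 0 ⟺ Err(P) ≤ α. -/

import Mathlib

open MeasureTheory
open ENNReal

noncomputable section

/-- The classification error `R(g) = P({(y,x) : g(x) ≠ y})`. -/
def classErr {p : ℕ} (P : Measure (Bool × (Fin p → ℝ))) (g : (Fin p → ℝ) → Bool) : ℝ :=
  (P {z | g z.2 ≠ z.1}).toReal

/-- The set of `α`-trimmed versions of a measure `μ`. -/
def trimmedSet {Ω : Type*} [MeasurableSpace Ω] (μ : Measure Ω) (α : ℝ) :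
    Set (Measure Ω) :=
  {ν | IsProbabilityMeasure ν ∧ ν ≪ μ ∧
    ∀ᵐ z ∂μ, ν.rnDeriv μ z ≤ ENNReal.ofReal (1 / (1 - α))}

/-- The Bayes error `Err(Q) = inf_g Q(g(x) ≠ y)`, infimum over measurable classifiers. -/
def bayesErr {p : ℕ} (Q : Measure (Bool × (Fin p → ℝ))) : ℝ :=
  sInf ((fun g => classErr Q g) '' {g : (Fin p → ℝ) → Bool | Measurable g})

/-- The `α`-trimmed Bayes error `Err_α(P) = inf_{Q ∈ 𝓡_α(P)} Err(Q)`. -/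
def trimmedBayesErr {p : ℕ} (P : Measure (Bool × (Fin p → ℝ))) (α : ℝ) : ℝ :=
  sInf (bayesErr '' trimmedSet P α)

lemma errSet_measurable {p : ℕ} {g : (Fin p → ℝ) → Bool} (hg : Measurable g) :
    MeasurableSet {z : Bool × (Fin p → ℝ) | g z.2 ≠ z.1} := by
  have h2 : Measurable fun z : Bool × (Fin p → ℝ) => g z.2 := hg.comp measurable_snd
  have : {z : Bool × (Fin p → ℝ) | g z.2 ≠ z.1} =
      ((fun z : Bool × (Fin p → ℝ) => g z.2) ⁻¹' {true} ∩ Prod.fst ⁻¹' {false}) ∪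
      ((fun z : Bool × (Fin p → ℝ) => g z.2) ⁻¹' {false} ∩ Prod.fst ⁻¹' {true}) := by
    ext ⟨y, x⟩
    simp only [Set.mem_setOf_eq, Set.mem_union, Set.mem_inter_iff, Set.mem_preimage,
      Set.mem_singleton_iff]
    cases y <;> cases h : g x <;> simp
  rw [this]
  exact ((h2 (measurableSet_singleton _)).inter (measurable_fst (measurableSet_singleton _))).union
    ((h2 (measurableSet_singleton _)).inter (measurable_fst (measurableSet_singleton _)))

lemma bddBelow_classErrSet {p : ℕ} (Q : Measure (Bool × (Fin p → ℝ))) :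
    BddBelow ((fun g => classErr Q g) '' {g : (Fin p → ℝ) → Bool | Measurable g}) :=
  ⟨0, by rintro x ⟨g, -, rfl⟩; exact ENNReal.toReal_nonneg⟩

lemma bayesErr_nonneg {p : ℕ} (Q : Measure (Bool × (Fin p → ℝ))) : 0 ≤ bayesErr Q :=
  Real.sInf_nonneg (by rintro x ⟨g, -, rfl⟩; exact ENNReal.toReal_nonneg)

lemma bayesErr_le_classErr {p : ℕ} (Q : Measure (Bool × (Fin p → ℝ)))
    {g : (Fin p → ℝ) → Bool} (hg : Measurable g) : bayesErr Q ≤ classErr Q g :=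
  csInf_le (bddBelow_classErrSet Q) ⟨g, hg, rfl⟩

lemma bddBelow_bayesErrSet {p : ℕ} (P : Measure (Bool × (Fin p → ℝ))) (α : ℝ) :
    BddBelow (bayesErr '' trimmedSet P α) :=
  ⟨0, by rintro x ⟨ν, -, rfl⟩; exact bayesErr_nonneg ν⟩

lemma trimmedBayesErr_le {p : ℕ} (P : Measure (Bool × (Fin p → ℝ))) (α : ℝ)
    {ν : Measure (Bool × (Fin p → ℝ))} (hν : ν ∈ trimmedSet P α) :
    trimmedBayesErr P α ≤ bayesErr ν :=
  csInf_le (bddBelow_bayesErrSet P α) ⟨ν, hν, rfl⟩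

lemma construct {p : ℕ} (P : Measure (Bool × (Fin p → ℝ))) [IsProbabilityMeasure P] {α : ℝ}
    (hα : α ∈ Set.Ioo (0 : ℝ) 1) {A : Set (Bool × (Fin p → ℝ))} (hA : MeasurableSet A)
    {c d : ℝ} (hc0 : 0 ≤ c) (hd0 : 0 ≤ d) (hc : c ≤ 1 / (1 - α)) (hd : d ≤ 1 / (1 - α))
    (hsum : c * (P Aᶜ).toReal + d * (P A).toReal = 1) :
    ∃ ν ∈ trimmedSet P α, (ν A).toReal = d * (P A).toReal := by
  set f : Bool × (Fin p → ℝ) → ℝ≥0∞ :=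
    A.indicator (fun _ => ENNReal.ofReal d) + Aᶜ.indicator (fun _ => ENNReal.ofReal c) with hf
  have hfm : Measurable f :=
    (measurable_const.indicator hA).add (measurable_const.indicator hA.compl)
  set ν := P.withDensity f with hν
  have hmemA : ∀ z ∈ A, z ∉ Aᶜ := fun z hz => by simpa using hz
  have hfA : ∀ z ∈ A, f z = (fun _ : Bool × (Fin p → ℝ) => ENNReal.ofReal d) z := fun z hz => by
    simp [hf, Set.indicator_of_mem hz, Set.indicator_of_notMem (hmemA z hz)]
  have hfAc : ∀ z ∉ A, f z = ENNReal.ofReal c := fun z hz => by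
    simp [hf, Set.indicator_of_notMem hz, Set.indicator_of_mem (show z ∈ Aᶜ from hz)]
  have hνA : ν A = ENNReal.ofReal d * P A := by
    rw [hν, withDensity_apply _ hA, setLIntegral_congr_fun hA (fun z hz => hfA z hz),
      setLIntegral_const]
  have hPA : P A = ENNReal.ofReal (P A).toReal := (ENNReal.ofReal_toReal (measure_ne_top P A)).symm
  have hPAc : P Aᶜ = ENNReal.ofReal (P Aᶜ).toReal :=
    (ENNReal.ofReal_toReal (measure_ne_top P Aᶜ)).symm
  have hprob : IsProbabilityMeasure ν := by
    constructor
    rw [hν, withDensity_apply _ MeasurableSet.univ, Measure.restrict_univ, hf]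
    simp only [Pi.add_apply]
    rw [lintegral_add_left (measurable_const.indicator hA), lintegral_indicator hA _,
      lintegral_indicator hA.compl _, setLIntegral_const, setLIntegral_const, hPA, hPAc,
      ← ENNReal.ofReal_mul hd0, ← ENNReal.ofReal_mul hc0, ← ENNReal.ofReal_add
      (mul_nonneg hd0 ENNReal.toReal_nonneg) (mul_nonneg hc0 ENNReal.toReal_nonneg)]
    rw [show d * (P A).toReal + c * (P Aᶜ).toReal = 1 by linarith]
    simp
  refine ⟨ν, ⟨hprob, withDensity_absolutelyContinuous P f, ?_⟩, by
    rw [hνA, ENNReal.toReal_mul, ENNReal.toReal_ofReal hd0]⟩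
  filter_upwards [Measure.rnDeriv_withDensity P hfm] with z hz
  rw [hz]
  by_cases hzA : z ∈ A
  · rw [hfA z hzA]; exact ENNReal.ofReal_le_ofReal hd
  · rw [hfAc z hzA]; exact ENNReal.ofReal_le_ofReal hc


/-- The `α`-trimmed Bayes error vanishes iff the Bayes error is at most `α`. -/
theorem trimmedBayesErr_eq_zero_iff {p : ℕ} (P : Measure (Bool × (Fin p → ℝ)))
    [IsProbabilityMeasure P] {α : ℝ} (hα : α ∈ Set.Ioo (0 : ℝ) 1) :
    trimmedBayesErr P α = 0 ↔ bayesErr P ≤ α := by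
  obtain ⟨hα0, hα1⟩ := hα
  have h1α : (0 : ℝ) < 1 - α := by linarith
  constructor
  · -- forward
    intro h0
    refine le_of_forall_pos_le_add (fun ε hε => ?_)
    have hPmem : P ∈ trimmedSet P α := by
      refine ⟨inferInstance, Measure.AbsolutelyContinuous.refl P, ?_⟩
      filter_upwards [Measure.rnDeriv_self P] with z hz
      rw [hz, show (1 : ℝ≥0∞) = ENNReal.ofReal 1 by simp]
      exact ENNReal.ofReal_le_ofReal (by rw [le_div_iff₀ h1α]; nlinarith)
    obtain ⟨x, ⟨ν, hν, rfl⟩, hx⟩ :=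
      exists_lt_of_csInf_lt ⟨_, Set.mem_image_of_mem bayesErr hPmem⟩
        (show sInf (bayesErr '' trimmedSet P α) < ε from
          (show sInf (bayesErr '' trimmedSet P α) = 0 from h0) ▸ hε)
    obtain ⟨hνprob, hac, hbound⟩ := hν
    obtain ⟨x, ⟨g, hg, rfl⟩, hy⟩ :=
      exists_lt_of_csInf_lt ⟨_, Set.mem_image_of_mem _ (measurable_const (a := true))⟩ hx
    set A := {z : Bool × (Fin p → ℝ) | g z.2 ≠ z.1} with hAdef
    have hA : MeasurableSet A := errSet_measurable hg
    haveI := hνprob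
    have hνc : ν Aᶜ ≤ ENNReal.ofReal (1 / (1 - α)) * P Aᶜ := by
      haveI : Measure.HaveLebesgueDecomposition ν P := Measure.haveLebesgueDecomposition_of_finiteMeasure
      conv_lhs => rw [← Measure.withDensity_rnDeriv_eq ν P hac]
      rw [withDensity_apply _ hA.compl]
      calc ∫⁻ z in Aᶜ, ν.rnDeriv P z ∂P
          ≤ ∫⁻ _ in Aᶜ, ENNReal.ofReal (1 / (1 - α)) ∂P :=
            lintegral_mono_ae (ae_restrict_of_ae hbound)
        _ = ENNReal.ofReal (1 / (1 - α)) * P Aᶜ := setLIntegral_const _ _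
    have hνcr : (ν Aᶜ).toReal ≤ 1 / (1 - α) * (P Aᶜ).toReal := by
      have := ENNReal.toReal_mono
        (ENNReal.mul_ne_top ENNReal.ofReal_ne_top (measure_ne_top P Aᶜ)) hνc
      rwa [ENNReal.toReal_mul, ENNReal.toReal_ofReal (by positivity)] at this
    have hνcompl : (ν Aᶜ).toReal = 1 - (ν A).toReal := by
      rw [prob_compl_eq_one_sub hA, ENNReal.toReal_sub_of_le prob_le_one ENNReal.one_ne_top,
        ENNReal.toReal_one]
    have hPcompl : (P Aᶜ).toReal = 1 - (P A).toReal := by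
      rw [prob_compl_eq_one_sub hA, ENNReal.toReal_sub_of_le prob_le_one ENNReal.one_ne_top,
        ENNReal.toReal_one]
    have hb : (ν A).toReal < ε := hy
    have ha1 : (P A).toReal ≤ α + ε := by
      rw [hνcompl, hPcompl] at hνcr
      have h2 : (1 - α) * (1 - (ν A).toReal) ≤ 1 - (P A).toReal := by
        rw [div_mul_eq_mul_div, le_div_iff₀ h1α] at hνcr
        nlinarith
      nlinarith [ENNReal.toReal_nonneg (a := ν A)]
    exact le_trans (bayesErr_le_classErr P hg) ha1
  · -- backward
    intro h
    refine le_antisymm ?_ (Real.sInf_nonneg (by rintro x ⟨ν, -, rfl⟩; exact bayesErr_nonneg ν))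
    have key : ∀ ε > (0 : ℝ), trimmedBayesErr P α ≤ ε := by
      intro ε hε
      set δ := (1 - α) * ε with hδdef
      have hδ : 0 < δ := by positivity
      obtain ⟨x, ⟨g, hg, rfl⟩, hx⟩ :=
        exists_lt_of_csInf_lt ⟨_, Set.mem_image_of_mem _ (measurable_const (a := true))⟩
          (show sInf _ < α + δ from lt_of_le_of_lt h (by linarith))
      set A := {z : Bool × (Fin p → ℝ) | g z.2 ≠ z.1} with hAdef
      have hA : MeasurableSet A := errSet_measurable hg
      set a := (P A).toReal with hadef
      have ha0 : 0 ≤ a := ENNReal.toReal_nonneg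
      have haδ : a < α + δ := hx
      have hPcompl : (P Aᶜ).toReal = 1 - a := by
        rw [prob_compl_eq_one_sub hA, ENNReal.toReal_sub_of_le prob_le_one ENNReal.one_ne_top,
          ENNReal.toReal_one]
      rcases le_or_gt a α with hle | hgt
      · -- a ≤ α : trim away all of A
        obtain ⟨ν, hν, hνA⟩ := construct P ⟨hα0, hα1⟩ hA (c := 1 / (1 - a)) (d := 0)
          (one_div_nonneg.mpr (by linarith)) le_rfl
          (one_div_le_one_div_of_le h1α (by linarith)) (by positivity)
          (by rw [hPcompl, zero_mul, add_zero, one_div_mul_cancel (ne_of_gt (by linarith : (0:ℝ) < 1 - a))])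
        calc trimmedBayesErr P α ≤ bayesErr ν := trimmedBayesErr_le P α hν
          _ ≤ classErr ν g := bayesErr_le_classErr ν hg
          _ = 0 := by rw [show classErr ν g = (ν A).toReal from rfl, hνA, zero_mul]
          _ ≤ ε := le_of_lt hε
      · -- α < a : keep a sliver of A
        have ha0' : 0 < a := lt_trans hα0 hgt
        obtain ⟨ν, hν, hνA⟩ := construct P ⟨hα0, hα1⟩ hA
          (c := 1 / (1 - α)) (d := (a - α) / ((1 - α) * a))
          (by positivity) (div_nonneg (by linarith) (by positivity)) le_rfl
          (by rw [div_le_div_iff₀ (by positivity) h1α]; nlinarith)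
          (by rw [hPcompl]; field_simp; ring)
        calc trimmedBayesErr P α ≤ bayesErr ν := trimmedBayesErr_le P α hν
          _ ≤ classErr ν g := bayesErr_le_classErr ν hg
          _ = (a - α) / ((1 - α) * a) * a := by
              rw [show classErr ν g = (ν A).toReal from rfl, hνA]
          _ ≤ ε := by
              rw [div_mul_eq_mul_div, mul_comm (1 - α) a, ← div_div, mul_div_assoc,
                div_self (ne_of_gt ha0'), mul_one, div_le_iff₀ h1α]
              nlinarith
    exact le_of_forall_pos_le_add (fun ε hε => by simpa using key ε hε)

end
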